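/- (Kapranov theorem, orders only.) Let f̃ ∈ K[x₁,…,x_n] be a polynomial over the field K of Puiseux series over ℂ, and let V_{f̃} ⊆ (K*)ⁿ be the set of roots of f̃ with all coordinates nonzero. Then the image of V_{f̃} under the componentwise order map O : (K*)ⁿ → ℚⁿ equals the tropical hypersurface 𝒯(f) = { r ∈ ℚⁿ : min_{i∈I} {o(ã_i) + i·r} is attained for at least two distinct indices i }. -/

import Mathlib

noncomputable section

/-- The field of (generalized) Puiseux series over `ℂ`, modeled as Hahn series
with value group `ℚ` and coefficients in `ℂ`. -/
abbrev K : Type := HahnSeries ℚ ℂ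

/-- The principal coefficient of a Puiseux series. -/
def pc (a : K) : ℂ := a.coeff a.order

/-- The weight of the multi-index `i` of `f` at the point `b`:
`o(a_i) + i·b`. -/
def wt {n : ℕ} (f : MvPolynomial (Fin n) K) (b : Fin n → ℚ) (i : Fin n →₀ ℕ) : ℚ :=
  (f.coeff i).order + ∑ j, (i j : ℚ) * b j

/-- The tropicalization `f(b) = min_{i ∈ supp f} (o(a_i) + i·b)`, with value `⊤`
for the zero polynomial. -/
def trop {n : ℕ} (f : MvPolynomial (Fin n) K) (b : Fin n → ℚ) : WithTop ℚ :=
  f.support.inf fun i => (wt f b i : WithTop ℚ)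

/-- The tropical hypersurface `𝒯(f)`: points where the minimum is attained at
least twice. -/
def tropSet {n : ℕ} (f : MvPolynomial (Fin n) K) : Set (Fin n → ℚ) :=
  {b | ∃ i ∈ f.support, ∃ j ∈ f.support, i ≠ j ∧
    (wt f b i : WithTop ℚ) = trop f b ∧ (wt f b j : WithTop ℚ) = trop f b}

/-- The initial form `f̃_b ∈ ℂ[x]` of `f` at `b`. -/
def initForm {n : ℕ} (f : MvPolynomial (Fin n) K) (b : Fin n → ℚ) :
    MvPolynomial (Fin n) ℂ :=
  ∑ i ∈ f.support.filter fun i => (wt f b i : WithTop ℚ) = trop f b,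
    MvPolynomial.monomial i (pc (f.coeff i))

open HahnSeries Polynomial Finset

namespace Kap

/-- `v x ≥ L` (true for `x = 0`). -/
def vge (L : ℚ) (x : K) : Prop := ∀ q : ℚ, q < L → x.coeff q = 0

/-- `v x > L` (true for `x = 0`). -/
def vgt (L : ℚ) (x : K) : Prop := ∀ q : ℚ, q ≤ L → x.coeff q = 0

lemma vgt.vge {L : ℚ} {x : K} (h : vgt L x) : vge L x := fun q hq => h q hq.le

lemma vge_zero (L : ℚ) : vge L (0 : K) := fun _ _ => rfl
lemma vgt_zero (L : ℚ) : vgt L (0 : K) := fun _ _ => rfl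

lemma vge_of_order_le {L : ℚ} {x : K} (h : L ≤ x.order) : vge L x := by
  intro q hq
  rcases eq_or_ne x 0 with rfl | hx
  · rfl
  · exact HahnSeries.coeff_eq_zero_of_lt_order (lt_of_lt_of_le hq h)

lemma vgt_of_order_lt {L : ℚ} {x : K} (h : L < x.order) : vgt L x := by
  intro q hq
  rcases eq_or_ne x 0 with rfl | hx
  · rfl
  · exact HahnSeries.coeff_eq_zero_of_lt_order (lt_of_le_of_lt hq h)

lemma vge.order_le {L : ℚ} {x : K} (h : vge L x) (hx : x ≠ 0) : L ≤ x.order := by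
  by_contra hc
  exact (mt HahnSeries.coeff_order_eq_zero.mp hx) (h _ (not_le.mp hc))

lemma vgt.order_lt {L : ℚ} {x : K} (h : vgt L x) (hx : x ≠ 0) : L < x.order := by
  by_contra hc
  exact (mt HahnSeries.coeff_order_eq_zero.mp hx) (h _ (not_lt.mp hc))

lemma vge.add {L : ℚ} {x y : K} (hx : vge L x) (hy : vge L y) : vge L (x + y) := by
  intro q hq; rw [HahnSeries.coeff_add, hx q hq, hy q hq, add_zero]

lemma vgt.add {L : ℚ} {x y : K} (hx : vgt L x) (hy : vgt L y) : vgt L (x + y) := by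
  intro q hq; rw [HahnSeries.coeff_add, hx q hq, hy q hq, add_zero]

lemma vge.mono {L L' : ℚ} {x : K} (h : vge L x) (hle : L' ≤ L) : vge L' x :=
  fun q hq => h q (lt_of_lt_of_le hq hle)

lemma vgt.mono {L L' : ℚ} {x : K} (h : vgt L x) (hle : L' ≤ L) : vgt L' x :=
  fun q hq => h q (le_trans hq hle)

lemma vge.mul {L M : ℚ} {x y : K} (hx : vge L x) (hy : vge M y) : vge (L + M) (x * y) := by
  rcases eq_or_ne x 0 with rfl | hx0
  · rw [zero_mul]; exact vge_zero _
  rcases eq_or_ne y 0 with rfl | hy0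
  · rw [mul_zero]; exact vge_zero _
  apply vge_of_order_le
  rw [HahnSeries.order_mul hx0 hy0]
  exact add_le_add (hx.order_le hx0) (hy.order_le hy0)

lemma vge.pow {L : ℚ} {x : K} (hx : vge L x) (n : ℕ) : vge (n * L) (x ^ n) := by
  induction n with
  | zero => simpa using vge_of_order_le (by simp [HahnSeries.order_one])
  | succ n ih =>
      have := ih.mul hx
      rw [← pow_succ] at this
      convert this using 1
      push_cast; ring

lemma coeff_sum {ι : Type*} (s : Finset ι) (F : ι → K) (q : ℚ) :
    (∑ i ∈ s, F i).coeff q = ∑ i ∈ s, (F i).coeff q := by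
  classical
  induction s using Finset.induction with
  | empty => simp
  | insert _ _ h ih => simp [Finset.sum_insert h, ih]

lemma vge.sum {ι : Type*} {s : Finset ι} {F : ι → K} {L : ℚ}
    (h : ∀ i ∈ s, vge L (F i)) : vge L (∑ i ∈ s, F i) := by
  intro q hq
  rw [coeff_sum]
  exact Finset.sum_eq_zero fun i hi => h i hi q hq

lemma vgt.sum {ι : Type*} {s : Finset ι} {F : ι → K} {L : ℚ}
    (h : ∀ i ∈ s, vgt L (F i)) : vgt L (∑ i ∈ s, F i) := by
  intro q hq
  rw [coeff_sum]
  exact Finset.sum_eq_zero fun i hi => h i hi q hq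

/-- order determination: if `v ≥ L` and coefficient at `L` is nonzero. -/
lemma order_eq_of_vge {L : ℚ} {x : K} (h : vge L x) (h2 : x.coeff L ≠ 0) : x.order = L := by
  have hx : x ≠ 0 := fun hc => h2 (by simp [hc])
  exact le_antisymm (HahnSeries.order_le_of_coeff_ne_zero h2) (h.order_le hx)

open Classical in
lemma coeff_order_of_vge {L : ℚ} {x : K} (h : vge L x) :
    x.coeff L = if x ≠ 0 ∧ x.order = L then pc x else 0 := by
  split_ifs with hc
  · rw [← hc.2]; rfl
  · push_neg at hc
    rcases eq_or_ne x 0 with rfl | hx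
    · rfl
    · have : x.order ≠ L := hc hx
      rcases lt_or_gt_of_ne this with hlt | hgt
      · exact absurd (h.order_le hx) (not_le.mpr hlt)
      · exact HahnSeries.coeff_eq_zero_of_lt_order hgt

lemma pc_eq_leadingCoeff {x : K} (hx : x ≠ 0) : pc x = x.leadingCoeff := by
  rw [HahnSeries.leadingCoeff_eq, pc]

lemma pc_mul {x y : K} (hx : x ≠ 0) (hy : y ≠ 0) : pc (x * y) = pc x * pc y := by
  unfold pc
  rw [HahnSeries.order_mul hx hy, HahnSeries.coeff_mul_order_add_order x y,
    ← pc_eq_leadingCoeff hx, ← pc_eq_leadingCoeff hy]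
  rfl

lemma pc_ne_zero {x : K} (hx : x ≠ 0) : pc x ≠ 0 := (mt HahnSeries.coeff_order_eq_zero.mp hx)

lemma pc_pow {x : K} (hx : x ≠ 0) (n : ℕ) : pc (x ^ n) = (pc x) ^ n := by
  induction n with
  | zero => simp only [pow_zero]; unfold pc; rw [HahnSeries.order_one]; simp [HahnSeries.coeff_one]
  | succ n ih => rw [pow_succ, pc_mul (pow_ne_zero _ hx) hx, ih, pow_succ]

lemma pc_single {a : ℚ} {r : ℂ} (hr : r ≠ 0) : pc (HahnSeries.single a r : K) = r := by
  unfold pc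
  rw [HahnSeries.order_single hr, HahnSeries.coeff_single_same]

-- residue lemmas
lemma res_mul {x y : K} (hx : vge 0 x) (hy : vge 0 y) :
    (x * y).coeff 0 = x.coeff 0 * y.coeff 0 := by
  rcases eq_or_ne x 0 with rfl | hx0
  · simp
  rcases eq_or_ne y 0 with rfl | hy0
  · simp
  have hox := hx.order_le hx0
  have hoy := hy.order_le hy0
  rcases eq_or_lt_of_le hox with hx1 | hx1
  · rcases eq_or_lt_of_le hoy with hy1 | hy1
    · have := HahnSeries.coeff_mul_order_add_order x y
      rw [← hx1, ← hy1, add_zero] at this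
      rw [this, ← pc_eq_leadingCoeff hx0, ← pc_eq_leadingCoeff hy0]
      unfold pc
      rw [← hx1, ← hy1]
    · have h1 : y.coeff 0 = 0 := HahnSeries.coeff_eq_zero_of_lt_order hy1
      have h2 : (x * y).coeff 0 = 0 := by
        have : vgt 0 (x*y) := by
          apply vgt_of_order_lt
          rw [HahnSeries.order_mul hx0 hy0, ← hx1, zero_add]; exact hy1
        exact this 0 le_rfl
      rw [h1, h2, mul_zero]
  · have h1 : x.coeff 0 = 0 := HahnSeries.coeff_eq_zero_of_lt_order hx1
    have h2 : (x * y).coeff 0 = 0 := by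
      have : vgt 0 (x*y) := by
        apply vgt_of_order_lt
        rw [HahnSeries.order_mul hx0 hy0]
        exact add_pos_of_pos_of_nonneg hx1 hoy
      exact this 0 le_rfl
    rw [h1, h2, zero_mul]

lemma res_pow {x : K} (hx : vge 0 x) (n : ℕ) : (x ^ n).coeff 0 = (x.coeff 0) ^ n := by
  induction n with
  | zero => simp [HahnSeries.coeff_one]
  | succ n ih =>
      rw [pow_succ, res_mul (by simpa using (hx.pow n)) hx, ih, pow_succ]

lemma vge_natCast (m : ℕ) : vge 0 ((m : K)) := by
  apply vge_of_order_le
  rcases eq_or_ne (m : K) 0 with h | h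
  · rw [h, HahnSeries.order_zero]
  · rw [← map_natCast (HahnSeries.C : ℂ →+* K) m]
    rw [HahnSeries.C_apply, HahnSeries.order_single]
    intro hc
    exact h (by rw [← map_natCast (HahnSeries.C : ℂ →+* K) m, HahnSeries.C_apply, hc]; simp)

lemma res_natCast (m : ℕ) : ((m : K)).coeff 0 = (m : ℂ) := by
  rw [← map_natCast (HahnSeries.C : ℂ →+* K) m, HahnSeries.C_apply, HahnSeries.coeff_single_same]


/-- Exact order of a sum when one term has strictly smaller order. -/
lemma order_add_of_lt {x y : K} (hx : x ≠ 0) (hxy : vgt x.order y) :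
    x + y ≠ 0 ∧ (x + y).order = x.order ∧ pc (x + y) = pc x := by
  have hco : (x + y).coeff x.order = x.coeff x.order := by
    rw [HahnSeries.coeff_add, hxy _ le_rfl, add_zero]
  have hcne : (x + y).coeff x.order ≠ 0 := by
    rw [hco]; exact (mt HahnSeries.coeff_order_eq_zero.mp hx)
  have hne : x + y ≠ 0 := fun hc => by rw [hc] at hcne; simp at hcne
  have hvge : vge x.order (x + y) :=
    (vge_of_order_le le_rfl).add hxy.vge
  have ho : (x + y).order = x.order := order_eq_of_vge hvge hcne
  exact ⟨hne, ho, by rw [pc, ho, hco]; rfl⟩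

/-- coefficient of taylor at top degree. -/
lemma taylor_coeff_top {R : Type*} [CommRing R] [Nontrivial R] [NoZeroDivisors R] (w : R) (P : Polynomial R) :
    (Polynomial.taylor w P).coeff P.natDegree = P.leadingCoeff := by
  rcases eq_or_ne P 0 with rfl | hP
  · simp
  have h1 : (Polynomial.taylor w P).natDegree = P.natDegree := Polynomial.natDegree_taylor P w
  have h2 : (Polynomial.taylor w P).leadingCoeff = P.leadingCoeff := by
    rw [Polynomial.taylor_apply, Polynomial.leadingCoeff_comp (by simp)]
    simp [Polynomial.leadingCoeff_X_add_C]
  rw [← h2, Polynomial.leadingCoeff, h1]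

lemma hasseDeriv_eval_top {R : Type*} [CommRing R] [Nontrivial R] [NoZeroDivisors R] (w : R) (P : Polynomial R) :
    (Polynomial.hasseDeriv P.natDegree P).eval w = P.leadingCoeff := by
  rw [← Polynomial.taylor_coeff, taylor_coeff_top]

/-- A complex polynomial with nonzero constant coefficient and positive degree has
a nonzero root. -/
lemma exists_nonzero_root {P : Polynomial ℂ} (h0 : P.coeff 0 ≠ 0) (hd : 1 ≤ P.natDegree) :
    ∃ z : ℂ, z ≠ 0 ∧ P.eval z = 0 := by
  have : 0 < P.degree := by
    rw [← Polynomial.natDegree_pos_iff_degree_pos]; omega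
  obtain ⟨z, hz⟩ := Complex.exists_root this
  refine ⟨z, ?_, hz⟩
  rintro rfl
  rw [Polynomial.IsRoot, ← Polynomial.coeff_zero_eq_eval_zero] at hz
  exact h0 hz


section Engine

open Polynomial

variable (H : Polynomial K)

/-- Taylor coefficients of `H` at `y`. -/
def cc (y : K) (k : ℕ) : K := (Polynomial.taylor y H).coeff k

variable {H}

lemma cc_zero (y : K) : cc H y 0 = H.eval y := Polynomial.taylor_coeff_zero y H

lemma cc_top (y : K) : cc H y H.natDegree = H.leadingCoeff := taylor_coeff_top y H

lemma cc_of_gt {k : ℕ} (y : K) (h : H.natDegree < k) : cc H y k = 0 :=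
  Polynomial.coeff_eq_zero_of_natDegree_lt (by rwa [Polynomial.natDegree_taylor])

lemma cc_expand (y z : K) (k : ℕ) :
    cc H (y + z) k =
      ∑ j ∈ Finset.range (H.natDegree + 1),
        (((j + k).choose k : K) * cc H y (j + k)) * z ^ j := by
  have h1 : cc H (y + z) k = (Polynomial.hasseDeriv k (Polynomial.taylor y H)).eval z := by
    rw [cc, add_comm y z, ← Polynomial.taylor_taylor H z y, Polynomial.taylor_coeff]
  have h2 : (Polynomial.hasseDeriv k (Polynomial.taylor y H)).natDegree < H.natDegree + 1 := by
    have := Polynomial.natDegree_hasseDeriv_le (Polynomial.taylor y H) k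
    rw [Polynomial.natDegree_taylor] at this
    omega
  rw [h1, Polynomial.eval_eq_sum_range' h2]
  refine Finset.sum_congr rfl fun j _ => ?_
  rw [Polynomial.hasseDeriv_coeff]
  rfl

lemma cc_eval_expand (y : K) (k : ℕ) :
    cc H y k =
      ∑ j ∈ Finset.range (H.natDegree + 1),
        (((j + k).choose k : K) * H.coeff (j + k)) * y ^ j := by
  have := cc_expand (H := H) 0 y k
  rw [zero_add] at this
  rw [this]
  refine Finset.sum_congr rfl fun j _ => ?_
  rw [cc, Polynomial.taylor_zero']
  rfl

/-- The residue polynomial `H̄ ∈ ℂ[X]`. -/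
def resPoly (H : Polynomial K) : Polynomial ℂ :=
  ∑ k ∈ Finset.range (H.natDegree + 1), Polynomial.C ((H.coeff k).coeff 0) * Polynomial.X ^ k

lemma coeff_sum_CXpow (s : Finset ℕ) (a : ℕ → ℂ) (k : ℕ) :
    (∑ i ∈ s, Polynomial.C (a i) * Polynomial.X ^ i).coeff k = if k ∈ s then a k else 0 := by
  rw [Polynomial.finset_sum_coeff]
  rw [Finset.sum_congr rfl (fun i _ => by rw [Polynomial.coeff_C_mul, Polynomial.coeff_X_pow])]
  simp only [mul_ite, mul_one, mul_zero]
  rw [Finset.sum_ite_eq s k a]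

lemma resPoly_coeff (k : ℕ) : (resPoly H).coeff k = (H.coeff k).coeff 0 := by
  rw [resPoly, coeff_sum_CXpow]
  split_ifs with h
  · rfl
  · rw [Finset.mem_range, not_lt] at h
    rw [Polynomial.coeff_eq_zero_of_natDegree_lt (by omega)]
    simp

lemma natDegree_resPoly_le : (resPoly H).natDegree ≤ H.natDegree := by
  refine Polynomial.natDegree_le_iff_coeff_eq_zero.mpr fun N hN => ?_
  rw [resPoly_coeff, Polynomial.coeff_eq_zero_of_natDegree_lt hN]
  simp

lemma order_natCast_ne {m : ℕ} (hm : m ≠ 0) : ((m : K)) ≠ 0 ∧ ((m : K)).order = 0 ∧ pc (m : K) = m := by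
  have h1 : (m : K) = HahnSeries.single 0 (m : ℂ) := by
    rw [← map_natCast (HahnSeries.C : ℂ →+* K) m, HahnSeries.C_apply]
  have h2 : ((m : ℂ)) ≠ 0 := Nat.cast_ne_zero.mpr hm
  refine ⟨by rw [h1]; exact HahnSeries.single_ne_zero h2, ?_, ?_⟩
  · rw [h1, HahnSeries.order_single h2]
  · rw [h1, pc_single h2]

/-- residue of Taylor coefficients via the residue polynomial. -/
lemma res_cc (y : K) (hc : ∀ k, vge 0 (H.coeff k)) (hy : vge 0 y) (k : ℕ) :
    (cc H y k).coeff 0 = (Polynomial.hasseDeriv k (resPoly H)).eval (y.coeff 0) := by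
  have hd2 : (Polynomial.hasseDeriv k (resPoly H)).natDegree < H.natDegree + 1 := by
    have := Polynomial.natDegree_hasseDeriv_le (resPoly H) k
    have := natDegree_resPoly_le (H := H)
    omega
  rw [cc_eval_expand, coeff_sum, Polynomial.eval_eq_sum_range' hd2]
  refine Finset.sum_congr rfl fun j _ => ?_
  have h1 : vge 0 ((((j + k).choose k : K)) * H.coeff (j + k)) := by
    simpa using (vge_natCast ((j+k).choose k)).mul (hc (j+k))
  have h2 : vge 0 (y ^ j) := by simpa using hy.pow j
  rw [res_mul h1 h2, res_mul (by simpa using vge_natCast ((j+k).choose k)) (hc (j+k)),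
    res_pow hy, res_natCast, Polynomial.hasseDeriv_coeff, resPoly_coeff]

lemma vge0_cc (y : K) (hc : ∀ k, vge 0 (H.coeff k)) (hy : vge 0 y) (k : ℕ) :
    vge 0 (cc H y k) := by
  rw [cc_eval_expand]
  refine vge.sum fun j _ => ?_
  have := ((vge_natCast ((j+k).choose k)).mul (hc (j+k))).mul (hy.pow j)
  simpa using this

end Engine


section Slope

open Polynomial
open scoped Classical

/-- Indices `1 ≤ k ≤ d` with nonzero Taylor coefficient. -/
def BB (H : Polynomial K) (y : K) : Finset ℕ :=
  (Finset.range (H.natDegree + 1)).filter fun k => k ≠ 0 ∧ cc H y k ≠ 0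

/-- The maximal slope. -/
def gam (H : Polynomial K) {y : K} (hne : (BB H y).Nonempty) : ℚ :=
  (BB H y).sup' hne fun k => ((cc H y 0).order - (cc H y k).order) / k

lemma BB_nonempty {H : Polynomial K} (hH0 : H ≠ 0) (hd : 1 ≤ H.natDegree) (y : K) :
    (BB H y).Nonempty := by
  refine ⟨H.natDegree, ?_⟩
  rw [BB, Finset.mem_filter, Finset.mem_range]
  refine ⟨by omega, by omega, ?_⟩
  rw [cc_top]
  exact Polynomial.leadingCoeff_ne_zero.mpr hH0

lemma mem_BB {H : Polynomial K} {y : K} {k : ℕ} :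
    k ∈ BB H y ↔ k ≤ H.natDegree ∧ k ≠ 0 ∧ cc H y k ≠ 0 := by
  rw [BB, Finset.mem_filter, Finset.mem_range]
  constructor
  · rintro ⟨h1, h2, h3⟩; exact ⟨by omega, h2, h3⟩
  · rintro ⟨h1, h2, h3⟩; exact ⟨by omega, h2, h3⟩

/-- Fundamental slope bound: `v(c_k) ≥ v(c_0) - k·γ` for every `k`. -/
lemma slope_bound {H : Polynomial K} {y : K} (hne : (BB H y).Nonempty) (k : ℕ) :
    vge ((cc H y 0).order - k * gam H hne) (cc H y k) := by
  rcases eq_or_ne k 0 with rfl | hk0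
  · simp only [Nat.cast_zero, zero_mul, sub_zero]
    exact vge_of_order_le le_rfl
  rcases eq_or_ne (cc H y k) 0 with hck | hck
  · rw [hck]; exact vge_zero _
  rcases le_or_gt k H.natDegree with hkd | hkd
  · have hmem : k ∈ BB H y := mem_BB.mpr ⟨hkd, hk0, hck⟩
    have := Finset.le_sup' (fun k => ((cc H y 0).order - (cc H y k).order) / k) hmem
    change _ ≤ gam H hne at this
    apply vge_of_order_le
    have hkpos : (0:ℚ) < k := by exact_mod_cast Nat.pos_of_ne_zero hk0
    rw [div_le_iff₀ hkpos] at this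
    linarith [this]
  · exact absurd (cc_of_gt y hkd) hck

lemma gam_attained {H : Polynomial K} {y : K} (hne : (BB H y).Nonempty) :
    ∃ k ∈ BB H y, (cc H y k).order = (cc H y 0).order - k * gam H hne := by
  obtain ⟨k, hk, hke⟩ := Finset.exists_mem_eq_sup' hne
    (fun k => ((cc H y 0).order - (cc H y k).order) / k)
  refine ⟨k, hk, ?_⟩
  have hk0 : k ≠ 0 := (mem_BB.mp hk).2.1
  have hkpos : (0:ℚ) < k := by exact_mod_cast Nat.pos_of_ne_zero hk0
  rw [gam, hke]
  field_simp; ring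

/-- The argmin (initial) index set. -/
def AA {H : Polynomial K} {y : K} (hne : (BB H y).Nonempty) : Finset ℕ :=
  (Finset.range (H.natDegree + 1)).filter fun k =>
    cc H y k ≠ 0 ∧ (cc H y k).order = (cc H y 0).order - k * gam H hne

lemma mem_AA {H : Polynomial K} {y : K} {hne : (BB H y).Nonempty} {k : ℕ} :
    k ∈ AA hne ↔ k ≤ H.natDegree ∧ cc H y k ≠ 0 ∧
      (cc H y k).order = (cc H y 0).order - k * gam H hne := by
  rw [AA, Finset.mem_filter, Finset.mem_range]
  constructor
  · rintro ⟨h1, h2, h3⟩; exact ⟨by omega, h2, h3⟩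
  · rintro ⟨h1, h2, h3⟩; exact ⟨by omega, h2, h3⟩

lemma zero_mem_AA {H : Polynomial K} {y : K} (hne : (BB H y).Nonempty)
    (hy0 : cc H y 0 ≠ 0) : 0 ∈ AA hne := by
  rw [mem_AA]
  exact ⟨by omega, hy0, by simp⟩

/-- The initial form at `y`. -/
def phi {H : Polynomial K} {y : K} (hne : (BB H y).Nonempty) : Polynomial ℂ :=
  ∑ k ∈ AA hne, Polynomial.C (pc (cc H y k)) * Polynomial.X ^ k

lemma phi_coeff {H : Polynomial K} {y : K} (hne : (BB H y).Nonempty) (k : ℕ) :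
    (phi hne).coeff k = if k ∈ AA hne then pc (cc H y k) else 0 :=
  coeff_sum_CXpow _ _ _

lemma phi_coeff_zero {H : Polynomial K} {y : K} (hne : (BB H y).Nonempty)
    (hy0 : cc H y 0 ≠ 0) : (phi hne).coeff 0 = pc (cc H y 0) := by
  rw [phi_coeff, if_pos (zero_mem_AA hne hy0)]

lemma natDegree_phi_le {H : Polynomial K} {y : K} (hne : (BB H y).Nonempty) :
    (phi hne).natDegree ≤ H.natDegree := by
  refine Polynomial.natDegree_le_iff_coeff_eq_zero.mpr fun N hN => ?_
  rw [phi_coeff, if_neg]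
  rw [mem_AA]
  push_neg
  intro h
  omega

lemma one_le_natDegree_phi {H : Polynomial K} {y : K} (hne : (BB H y).Nonempty) :
    1 ≤ (phi hne).natDegree := by
  obtain ⟨k, hk, hke⟩ := gam_attained hne
  obtain ⟨hkd, hk0, hck⟩ := mem_BB.mp hk
  have hmem : k ∈ AA hne := mem_AA.mpr ⟨hkd, hck, hke⟩
  have : (phi hne).coeff k ≠ 0 := by
    rw [phi_coeff, if_pos hmem]
    exact pc_ne_zero hck
  have := Polynomial.le_natDegree_of_ne_zero this
  omega

lemma phi_ne_zero {H : Polynomial K} {y : K} (hne : (BB H y).Nonempty) : phi hne ≠ 0 := by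
  intro hc
  obtain ⟨k, hk, hke⟩ := gam_attained hne
  obtain ⟨hkd, hk0, hck⟩ := mem_BB.mp hk
  have hmem : k ∈ AA hne := mem_AA.mpr ⟨hkd, hck, hke⟩
  have : (phi hne).coeff k ≠ 0 := by
    rw [phi_coeff, if_pos hmem]
    exact pc_ne_zero hck
  rw [hc] at this
  simp at this

end Slope


section Level

open Polynomial

variable {H : Polynomial K} {y z : K}

lemma level_vge (hne : (BB H y).Nonempty) (hz : vge (gam H hne) z) (k : ℕ) :
    vge ((cc H y 0).order - k * gam H hne) (cc H (y + z) k) := by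
  rw [cc_expand]
  refine vge.sum fun j _ => ?_
  have t1 := (vge_natCast ((j+k).choose k)).mul (slope_bound hne (j+k))
  have t2 := t1.mul (hz.pow j)
  refine t2.mono (le_of_eq ?_)
  push_cast
  ring

lemma level_coeff (hne : (BB H y).Nonempty) (hz2 : z ≠ 0) (hzo : z.order = gam H hne) (k : ℕ) :
    (cc H (y + z) k).coeff ((cc H y 0).order - k * gam H hne)
      = (Polynomial.hasseDeriv k (phi hne)).eval (pc z) := by
  have hdphi : (Polynomial.hasseDeriv k (phi hne)).natDegree < H.natDegree + 1 := by
    have h1 := Polynomial.natDegree_hasseDeriv_le (phi hne) k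
    have h2 := natDegree_phi_le hne
    omega
  rw [cc_expand, coeff_sum, Polynomial.eval_eq_sum_range' hdphi]
  refine Finset.sum_congr rfl fun j _ => ?_
  rw [Polynomial.hasseDeriv_coeff, phi_coeff]
  rcases eq_or_ne (cc H y (j+k)) 0 with hc | hc
  · rw [hc, if_neg (fun hmem => (mem_AA.mp hmem).2.1 hc)]
    simp
  have hjk_le : j + k ≤ H.natDegree := by
    by_contra hgt
    exact hc (cc_of_gt y (by omega))
  have hN := order_natCast_ne (m := (j+k).choose k) (Nat.choose_pos (by omega)).ne'
  have hTne : ((j + k).choose k : K) * cc H y (j+k) * z ^ j ≠ 0 :=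
    mul_ne_zero (mul_ne_zero hN.1 hc) (pow_ne_zero _ hz2)
  have hTo : (((j + k).choose k : K) * cc H y (j+k) * z ^ j).order
      = (cc H y (j+k)).order + j * gam H hne := by
    rw [HahnSeries.order_mul (mul_ne_zero hN.1 hc) (pow_ne_zero _ hz2),
      HahnSeries.order_mul hN.1 hc, hN.2.1, HahnSeries.order_pow, hzo, zero_add,
      nsmul_eq_mul]
  by_cases hmem : j + k ∈ AA hne
  · have hord : (cc H y (j+k)).order = (cc H y 0).order - ((j+k : ℕ) : ℚ) * gam H hne :=
      (mem_AA.mp hmem).2.2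
    have hLo : (((j + k).choose k : K) * cc H y (j+k) * z ^ j).order
        = (cc H y 0).order - k * gam H hne := by
      rw [hTo, hord]; push_cast; ring
    rw [if_pos hmem, ← hLo]
    show pc _ = _
    rw [pc_mul (mul_ne_zero hN.1 hc) (pow_ne_zero _ hz2), pc_mul hN.1 hc, hN.2.2,
      pc_pow hz2]
  · rw [if_neg hmem]
    have hord : (cc H y (j+k)).order ≠ (cc H y 0).order - ((j+k : ℕ) : ℚ) * gam H hne := by
      intro hcon
      exact hmem (mem_AA.mpr ⟨hjk_le, hc, hcon⟩)
    have hge : (cc H y 0).order - k * gam H hne ≤ (((j + k).choose k : K) * cc H y (j+k) * z ^ j).order := by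
      have t1 := (vge_natCast ((j+k).choose k)).mul (slope_bound hne (j+k))
      have t2 := t1.mul ((vge_of_order_le (le_of_eq hzo.symm)).pow j)
      refine (t2.mono (le_of_eq ?_)).order_le hTne
      push_cast; ring
    have hne2 : (((j + k).choose k : K) * cc H y (j+k) * z ^ j).order
        ≠ (cc H y 0).order - k * gam H hne := by
      rw [hTo]
      intro hcon
      apply hord
      push_cast at hcon ⊢
      linarith [hcon]
    rw [HahnSeries.coeff_eq_zero_of_lt_order (lt_of_le_of_ne hge (Ne.symm hne2)), mul_zero,
      zero_mul]

end Level


lemma vgt_of_vge_coeff {L : ℚ} {x : K} (h : vge L x) (h2 : x.coeff L = 0) : vgt L x := by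
  intro q hq
  rcases lt_or_eq_of_le hq with h' | h'
  · exact h q h'
  · rw [h']; exact h2

section Corollaries

open Polynomial

variable {H : Polynomial K} {y : K}

/-- E3: moving by `v ≥ γ` does not decrease `v(H(y))`. -/
lemma eval_vge_of_vge {z : K} (hne : (BB H y).Nonempty) (hz : vge (gam H hne) z) :
    vge ((cc H y 0).order) (cc H (y + z) 0) := by
  have := level_vge hne hz 0
  simpa using this

/-- E1: the Newton step. -/
lemma newton_step (hne : (BB H y).Nonempty) (hy0 : cc H y 0 ≠ 0) :
    ∃ z : K, z ≠ 0 ∧ z.order = gam H hne ∧ vgt ((cc H y 0).order) (cc H (y + z) 0) := by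
  have hc0 : (phi hne).coeff 0 ≠ 0 := by
    rw [phi_coeff_zero hne hy0]
    exact pc_ne_zero hy0
  obtain ⟨z₁, hz₁, hz₁root⟩ := exists_nonzero_root hc0 (one_le_natDegree_phi hne)
  refine ⟨HahnSeries.single (gam H hne) z₁, HahnSeries.single_ne_zero hz₁,
    HahnSeries.order_single hz₁, ?_⟩
  have hvge := eval_vge_of_vge hne (vge_of_order_le (le_of_eq (HahnSeries.order_single hz₁).symm))
  refine vgt_of_vge_coeff hvge ?_
  have := level_coeff hne (HahnSeries.single_ne_zero hz₁) (HahnSeries.order_single hz₁) 0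
  simp only [Nat.cast_zero, zero_mul, sub_zero] at this
  rw [this, Polynomial.hasseDeriv_zero, LinearMap.id_apply, pc_single hz₁, hz₁root]

/-- E2: strict γ growth after a strict progress step. -/
lemma gam_growth {z : K} (hne : (BB H y).Nonempty) (hne' : (BB H (y + z)).Nonempty)
    (hy0 : cc H y 0 ≠ 0) (hz2 : z ≠ 0) (hzo : z.order = gam H hne)
    (hprog : vgt ((cc H y 0).order) (cc H (y + z) 0)) (hnew0 : cc H (y + z) 0 ≠ 0) :
    gam H hne < gam H hne' := by
  set khat := (phi hne).natDegree with hkh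
  have hk1 : 1 ≤ khat := one_le_natDegree_phi hne
  have hkd : khat ≤ H.natDegree := natDegree_phi_le hne
  have hcoeff : (cc H (y + z) khat).coeff ((cc H y 0).order - khat * gam H hne)
      = (phi hne).leadingCoeff := by
    rw [level_coeff hne hz2 hzo khat, hasseDeriv_eval_top]
  have hlc : (phi hne).leadingCoeff ≠ 0 := Polynomial.leadingCoeff_ne_zero.mpr (phi_ne_zero hne)
  have hcne : cc H (y + z) khat ≠ 0 := by
    intro hcon
    rw [hcon] at hcoeff
    simp only [HahnSeries.coeff_zero] at hcoeff
    exact hlc hcoeff.symm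
  have hord : (cc H (y + z) khat).order = (cc H y 0).order - khat * gam H hne :=
    order_eq_of_vge (level_vge hne (vge_of_order_le (le_of_eq hzo.symm)) khat)
      (by rw [hcoeff]; exact hlc)
  have hmem : khat ∈ BB H (y + z) := mem_BB.mpr ⟨hkd, by omega, hcne⟩
  have hsup := Finset.le_sup' (fun k => ((cc H (y+z) 0).order - (cc H (y+z) k).order) / k) hmem
  change _ ≤ gam H _ at hsup; rw [hord] at hsup
  have hgt : (cc H y 0).order < (cc H (y + z) 0).order := hprog.order_lt hnew0
  have hkpos : (0:ℚ) < khat := by exact_mod_cast hk1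
  have : gam H hne < ((cc H (y+z) 0).order - ((cc H y 0).order - khat * gam H hne)) / khat := by
    rw [lt_div_iff₀ hkpos]
    nlinarith [hgt, hkpos]
  linarith [hsup, this]

end Corollaries

section Carrier

open Polynomial

/-- Points of the carrier: `v(y - y₀) > 0` where `y₀ = z₀`. -/
lemma carrier_basic {z₀ : ℂ} (hz₀ : z₀ ≠ 0) {y : K}
    (hy : vgt 0 (y - HahnSeries.single 0 z₀)) :
    y.coeff 0 = z₀ ∧ vge 0 y ∧ y ≠ 0 := by
  have hco : y.coeff 0 = z₀ := by
    have : y = HahnSeries.single 0 z₀ + (y - HahnSeries.single 0 z₀) := by ring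
    rw [this, HahnSeries.coeff_add, HahnSeries.coeff_single_same, hy 0 le_rfl, add_zero]
  have hvge : vge 0 y := by
    have : y = HahnSeries.single 0 z₀ + (y - HahnSeries.single 0 z₀) := by ring
    rw [this]
    exact (vge_of_order_le (le_of_eq (HahnSeries.order_single hz₀).symm)).add hy.vge
  exact ⟨hco, hvge, fun hc => hz₀ (by rw [hc] at hco; simpa using hco.symm)⟩

lemma one_le_m {H : Polynomial K} {z₀ : ℂ} (hroot : (resPoly H).eval z₀ = 0)
    (hbar : resPoly H ≠ 0) : 1 ≤ (resPoly H).natDegree := by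
  by_contra hc
  push_neg at hc
  have h0 : (resPoly H).natDegree = 0 := by omega
  obtain ⟨a, ha⟩ := Polynomial.natDegree_eq_zero.mp h0
  rw [← ha] at hroot hbar
  rw [Polynomial.eval_C] at hroot
  rw [hroot] at hbar
  simp at hbar

lemma carrier_cm {H : Polynomial K} (hcoef : ∀ k, vge 0 (H.coeff k)) {z₀ : ℂ} (hz₀ : z₀ ≠ 0)
    (hbar : resPoly H ≠ 0) {y : K} (hy : vgt 0 (y - HahnSeries.single 0 z₀)) :
    cc H y ((resPoly H).natDegree) ≠ 0 ∧ (cc H y ((resPoly H).natDegree)).order = 0 := by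
  obtain ⟨hco, hvge, -⟩ := carrier_basic hz₀ hy
  have h1 : (cc H y ((resPoly H).natDegree)).coeff 0 = (resPoly H).leadingCoeff := by
    rw [res_cc y hcoef hvge, hco, hasseDeriv_eval_top]
  have h2 : (resPoly H).leadingCoeff ≠ 0 := Polynomial.leadingCoeff_ne_zero.mpr hbar
  have h3 : (cc H y ((resPoly H).natDegree)).coeff 0 ≠ 0 := by rw [h1]; exact h2
  exact ⟨fun hc => h3 (by simp [hc]), order_eq_of_vge (vge0_cc y hcoef hvge _) h3⟩

lemma carrier_c0 {H : Polynomial K} (hcoef : ∀ k, vge 0 (H.coeff k)) {z₀ : ℂ} (hz₀ : z₀ ≠ 0)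
    (hroot : (resPoly H).eval z₀ = 0) {y : K} (hy : vgt 0 (y - HahnSeries.single 0 z₀)) :
    vgt 0 (cc H y 0) := by
  obtain ⟨hco, hvge, -⟩ := carrier_basic hz₀ hy
  refine vgt_of_vge_coeff (vge0_cc y hcoef hvge 0) ?_
  rw [res_cc y hcoef hvge, hco, Polynomial.hasseDeriv_zero, LinearMap.id_apply, hroot]

lemma carrier_gam_pos {H : Polynomial K} (hcoef : ∀ k, vge 0 (H.coeff k)) {z₀ : ℂ}
    (hz₀ : z₀ ≠ 0) (hroot : (resPoly H).eval z₀ = 0) (hbar : resPoly H ≠ 0) {y : K}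
    (hne : (BB H y).Nonempty) (hy : vgt 0 (y - HahnSeries.single 0 z₀))
    (hy0 : cc H y 0 ≠ 0) :
    0 < gam H hne := by
  have hm1 := one_le_m hroot hbar
  have hmd : (resPoly H).natDegree ≤ H.natDegree := natDegree_resPoly_le
  obtain ⟨hcm, hcmo⟩ := carrier_cm hcoef hz₀ hbar hy
  have hmem : (resPoly H).natDegree ∈ BB H y := mem_BB.mpr ⟨hmd, by omega, hcm⟩
  have hsup := Finset.le_sup' (fun k => ((cc H y 0).order - (cc H y k).order) / k) hmem
  change _ ≤ gam H hne at hsup; rw [hcmo, sub_zero] at hsup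
  have hpos : 0 < (cc H y 0).order := (carrier_c0 hcoef hz₀ hroot hy).order_lt hy0
  have hmpos : (0:ℚ) < ((resPoly H).natDegree : ℚ) := by exact_mod_cast hm1
  have : 0 < (cc H y 0).order / ((resPoly H).natDegree : ℚ) := div_pos hpos hmpos
  linarith [hsup, this]

end Carrier


section ZornSetup

open Polynomial

/-- Total version of the slope function. -/
def gamT (H : Polynomial K) (hH0 : H ≠ 0) (hd : 1 ≤ H.natDegree) (y : K) : ℚ :=
  gam H (BB_nonempty hH0 hd y)

/-- The strict order on approximations used in the Zorn argument. -/
def Rel (H : Polynomial K) (hH0 : H ≠ 0) (hd : 1 ≤ H.natDegree) (z₀ : ℂ) (y y' : K) : Prop :=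
  vgt 0 (y - HahnSeries.single 0 z₀) ∧ vgt 0 (y' - HahnSeries.single 0 z₀) ∧
  cc H y 0 ≠ 0 ∧ vgt ((cc H y 0).order) (cc H y' 0) ∧
  y' - y ≠ 0 ∧ (y' - y).order = gamT H hH0 hd y ∧
  (cc H y' 0 ≠ 0 → gamT H hH0 hd y < gamT H hH0 hd y')

variable {H : Polynomial K} {z₀ : ℂ}

lemma Rel.irrefl (hH0 : H ≠ 0) (hd : 1 ≤ H.natDegree) (y : K) :
    ¬ Rel H hH0 hd z₀ y y := by
  rintro ⟨-, -, hy0, hvgt, -, -, -⟩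
  exact (mt HahnSeries.coeff_order_eq_zero.mp hy0) (hvgt _ le_rfl)

lemma Rel.trans (hH0 : H ≠ 0) (hd : 1 ≤ H.natDegree) {y y' y'' : K}
    (h1 : Rel H hH0 hd z₀ y y') (h2 : Rel H hH0 hd z₀ y' y'') :
    Rel H hH0 hd z₀ y y'' := by
  obtain ⟨hc1, hc2, hy0, hprog, hdne, hdord, hgrow⟩ := h1
  obtain ⟨-, hc3, hy0', hprog', hdne', hdord', hgrow'⟩ := h2
  have hlt : (cc H y 0).order < (cc H y' 0).order := hprog.order_lt hy0'
  have hgam : gamT H hH0 hd y < gamT H hH0 hd y' := hgrow hy0'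
  have hkey : vgt ((y' - y).order) (y'' - y') := by
    apply vgt_of_order_lt
    rw [hdord, hdord']
    exact hgam
  have hsum := order_add_of_lt hdne hkey
  have hrw : (y' - y) + (y'' - y') = y'' - y := by ring
  rw [hrw] at hsum
  refine ⟨hc1, hc3, hy0, hprog'.mono hlt.le, hsum.1, by rw [hsum.2.1, hdord], fun h0 => ?_⟩
  exact lt_trans hgam (hgrow' h0)

/-- The successor step: any non-root carrier point has a strict extension. -/
lemma step_extend (hH0 : H ≠ 0) (hd : 1 ≤ H.natDegree)
    (hcoef : ∀ k, vge 0 (H.coeff k)) (hz₀ : z₀ ≠ 0)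
    (hroot : (resPoly H).eval z₀ = 0) (hbar : resPoly H ≠ 0)
    {y : K} (hy : vgt 0 (y - HahnSeries.single 0 z₀)) (hy0 : cc H y 0 ≠ 0) :
    ∃ y', Rel H hH0 hd z₀ y y' := by
  have hne := BB_nonempty hH0 hd y
  obtain ⟨z, hz2, hzo, hprog⟩ := newton_step hne hy0
  have hgpos : 0 < gam H hne := carrier_gam_pos hcoef hz₀ hroot hbar hne hy hy0
  have hzpos : vgt 0 z := vgt_of_order_lt (by rw [hzo]; exact hgpos)
  refine ⟨y + z, hy, ?_, hy0, hprog, by simpa using hz2, by simpa [gamT] using hzo, fun h0 => ?_⟩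
  · have : y + z - HahnSeries.single 0 z₀ = (y - HahnSeries.single 0 z₀) + z := by ring
    rw [this]
    exact hy.add hzpos
  · exact gam_growth hne (BB_nonempty hH0 hd (y+z)) hy0 hz2 hzo hprog h0

end ZornSetup


open Polynomial in
/-- The root-finding engine: a Hensel–Newton–Kaplansky construction via Zorn's lemma. -/
theorem engine_main (H : Polynomial K) (z₀ : ℂ) (hH0 : H ≠ 0) (hd : 1 ≤ H.natDegree)
    (hcoef : ∀ k, vge 0 (H.coeff k)) (hz₀ : z₀ ≠ 0)
    (hroot : (resPoly H).eval z₀ = 0) (hbar : resPoly H ≠ 0) :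
    ∃ u : K, Polynomial.eval u H = 0 ∧ vgt 0 (u - HahnSeries.single 0 z₀) := by
  classical
  set y₀ : K := HahnSeries.single 0 z₀ with hy₀def
  set r := Rel H hH0 hd z₀ with hrdef
  have hchain0 : IsChain r {y₀} := Set.Subsingleton.isChain Set.subsingleton_singleton
  obtain ⟨M, hMmax, hM0⟩ := hchain0.exists_maxChain
  have hy₀M : y₀ ∈ M := hM0 rfl
  have hcar : ∀ y ∈ M, vgt 0 (y - y₀) := by
    intro y hyM
    rcases eq_or_ne y y₀ with rfl | hne
    · intro q _; simp
    · rcases hMmax.1 hyM hy₀M hne with h | h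
      · exact h.1
      · exact h.2.1
  by_cases hroot_in : ∃ y ∈ M, cc H y 0 = 0
  · obtain ⟨y, hyM, hy⟩ := hroot_in
    exact ⟨y, by rw [← cc_zero]; exact hy, hcar y hyM⟩
  push_neg at hroot_in
  have hall : ∀ y ∈ M, cc H y 0 ≠ 0 := hroot_in
  by_cases hsucc : ∀ y ∈ M, ∃ y' ∈ M, r y y'
  · -- No maximal element: build the pseudo-limit and contradict maximality (or find a root).
    have agree : ∀ (q : ℚ) (y : K), y ∈ M → q < gamT H hH0 hd y →
        ∀ (y' : K), y' ∈ M → q < gamT H hH0 hd y' → y.coeff q = y'.coeff q := by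
      have key : ∀ (q : ℚ) (y y' : K), r y y' → q < gamT H hH0 hd y →
          y.coeff q = y'.coeff q := by
        intro q y y' hr hq
        have h5 := hr.2.2.2.2.2.1
        have hco : (y' - y).coeff q = 0 :=
          HahnSeries.coeff_eq_zero_of_lt_order (by rw [h5]; exact hq)
        have h6 : y'.coeff q - y.coeff q = 0 := by rw [← HahnSeries.coeff_sub]; exact hco
        exact (sub_eq_zero.mp h6).symm
      intro q y hy hqy y' hy' hqy'
      rcases eq_or_ne y y' with rfl | hne
      · rfl
      rcases hMmax.1 hy hy' hne with h | h
      · exact key q y y' h hqy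
      · exact (key q y' y h hqy').symm
    set g : ℚ → ℂ := fun q =>
      if h : ∃ y ∈ M, q < gamT H hH0 hd y then h.choose.coeff q else 0 with hgdef
    have hgval : ∀ (q : ℚ) (y : K), y ∈ M → q < gamT H hH0 hd y → g q = y.coeff q := by
      intro q y hy hqy
      have hex : ∃ y ∈ M, q < gamT H hH0 hd y := ⟨y, hy, hqy⟩
      have : g q = hex.choose.coeff q := by rw [hgdef]; exact dif_pos hex
      rw [this]
      exact agree q _ hex.choose_spec.1 hex.choose_spec.2 y hy hqy
    have hsupp : (Function.support g).IsPWO := by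
      apply Set.IsWF.isPWO
      rw [Set.isWF_iff_no_descending_seq]
      intro f hf hmem
      have h0 : g (f 0) ≠ 0 := hmem 0
      have hex : ∃ y ∈ M, f 0 < gamT H hH0 hd y := by
        by_contra hc
        exact h0 (by rw [hgdef]; exact dif_neg hc)
      obtain ⟨y, hyM, hy⟩ := hex
      have hfy : ∀ n : ℕ, f n ∈ y.support := by
        intro n
        have hlt : f n < gamT H hH0 hd y := lt_of_le_of_lt (hf.antitone (Nat.zero_le n)) hy
        rw [HahnSeries.mem_support, ← hgval (f n) y hyM hlt]
        exact hmem n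
      exact (Set.isWF_iff_no_descending_seq.mp y.isWF_support) f hf hfy
    set ystar : K := ⟨g, hsupp⟩ with hystardef
    have hysc : ∀ q, ystar.coeff q = g q := fun _ => rfl
    have hvge_star : ∀ y ∈ M, vge (gamT H hH0 hd y) (ystar - y) := by
      intro y hyM q hq
      rw [HahnSeries.coeff_sub, hysc, hgval q y hyM hq, sub_self]
    have hexact : ∀ y ∈ M, ystar - y ≠ 0 ∧ (ystar - y).order = gamT H hH0 hd y := by
      intro y hyM
      obtain ⟨y', hy'M, hr⟩ := hsucc y hyM
      have hgam : gamT H hH0 hd y < gamT H hH0 hd y' := hr.2.2.2.2.2.2 (hall y' hy'M)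
      have hcoeff_ne : (ystar - y).coeff (gamT H hH0 hd y) ≠ 0 := by
        rw [HahnSeries.coeff_sub, hysc, hgval _ y' hy'M hgam, ← HahnSeries.coeff_sub,
          ← hr.2.2.2.2.2.1]
        exact (mt HahnSeries.coeff_order_eq_zero.mp hr.2.2.2.2.1)
      exact ⟨fun hc => hcoeff_ne (by rw [hc]; simp),
        order_eq_of_vge (hvge_star y hyM) hcoeff_ne⟩
    have hcar_star : vgt 0 (ystar - y₀) := by
      refine vgt_of_order_lt ?_
      rw [(hexact y₀ hy₀M).2]
      exact carrier_gam_pos hcoef hz₀ hroot hbar _ (hcar y₀ hy₀M) (hall y₀ hy₀M)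
    have hprog_star : ∀ y ∈ M, vgt ((cc H y 0).order) (cc H ystar 0) := by
      intro y hyM
      obtain ⟨y', hy'M, hr⟩ := hsucc y hyM
      have hyz : y' + (ystar - y') = ystar := by ring
      have hvge' : vge ((cc H y' 0).order) (cc H (y' + (ystar - y')) 0) :=
        eval_vge_of_vge (BB_nonempty hH0 hd y') (hvge_star y' hy'M)
      rw [hyz] at hvge'
      intro q hq
      have hlt : (cc H y 0).order < (cc H y' 0).order := hr.2.2.2.1.order_lt (hall y' hy'M)
      exact hvge' q (lt_of_le_of_lt hq hlt)
    by_cases hstar0 : cc H ystar 0 = 0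
    · exact ⟨ystar, by rw [← cc_zero]; exact hstar0, hcar_star⟩
    · have hrel_star : ∀ y ∈ M, r y ystar := by
        intro y hyM
        obtain ⟨y', hy'M, hr⟩ := hsucc y hyM
        have hyz : y' + (ystar - y') = ystar := by ring
        have hgrow : gamT H hH0 hd y < gamT H hH0 hd ystar := by
          have hprog' : vgt ((cc H y' 0).order) (cc H (y' + (ystar - y')) 0) := by
            rw [hyz]; exact hprog_star y' hy'M
          have hnew' : cc H (y' + (ystar - y')) 0 ≠ 0 := by rw [hyz]; exact hstar0
          have h1 : gamT H hH0 hd y' < gamT H hH0 hd (y' + (ystar - y')) :=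
            gam_growth (BB_nonempty hH0 hd y') (BB_nonempty hH0 hd (y' + (ystar - y')))
              (hall y' hy'M) (hexact y' hy'M).1 (hexact y' hy'M).2 hprog' hnew'
          rw [hyz] at h1
          exact lt_trans (hr.2.2.2.2.2.2 (hall y' hy'M)) h1
        exact ⟨hcar y hyM, hcar_star, hall y hyM, hprog_star y hyM,
          (hexact y hyM).1, (hexact y hyM).2, fun _ => hgrow⟩
      have hstarM : ystar ∉ M := fun hmem => Rel.irrefl hH0 hd ystar (hrel_star ystar hmem)
      have hchain' : IsChain r (insert ystar M) :=
        hMmax.1.insert fun b hb _ => Or.inr (hrel_star b hb)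
      have heq := hMmax.2 hchain' (Set.subset_insert _ _)
      exact absurd (heq ▸ Set.mem_insert ystar M) hstarM
  · push_neg at hsucc
    obtain ⟨yh, hyhM, hyhmax⟩ := hsucc
    obtain ⟨y', hy'⟩ := step_extend hH0 hd hcoef hz₀ hroot hbar (hcar yh hyhM) (hall yh hyhM)
    have hy'M : y' ∉ M := fun hmem => hyhmax y' hmem hy'
    have hchain' : IsChain r (insert y' M) := by
      refine hMmax.1.insert fun b hb hne => ?_
      rcases eq_or_ne b yh with rfl | hbne
      · exact Or.inr hy'
      · rcases hMmax.1 hb hyhM hbne with h | h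
        · exact Or.inr (Rel.trans hH0 hd h hy')
        · exact absurd h (hyhmax b hb)
    have heq := hMmax.2 hchain' (Set.subset_insert _ _)
    exact absurd (heq ▸ Set.mem_insert y' M) hy'M


open Polynomial in
/-- A complex polynomial with two nonzero coefficients has a nonzero root. -/
lemma exists_nonzero_root₂ {P : Polynomial ℂ} {m₁ m₂ : ℕ} (h1 : P.coeff m₁ ≠ 0)
    (h2 : P.coeff m₂ ≠ 0) (hne : m₁ ≠ m₂) : ∃ z : ℂ, z ≠ 0 ∧ P.eval z = 0 := by
  have hP : P ≠ 0 := fun hc => h1 (by rw [hc]; simp)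
  obtain ⟨Q, hQ, hQnd⟩ := P.exists_eq_pow_rootMultiplicity_mul_and_not_dvd hP 0
  rw [map_zero, sub_zero] at hQ hQnd
  set k := P.rootMultiplicity 0
  have hQ0 : Q.coeff 0 ≠ 0 := by
    intro hc
    exact hQnd (Polynomial.X_dvd_iff.mpr hc)
  have hQd : 1 ≤ Q.natDegree := by
    by_contra hc
    push_neg at hc
    have hQdeg : Q.natDegree = 0 := by omega
    obtain ⟨a, ha⟩ := Polynomial.natDegree_eq_zero.mp hQdeg
    have hcoeff : ∀ m : ℕ, P.coeff m = if m = k then a else 0 := by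
      intro m
      rw [hQ, ← ha, mul_comm, Polynomial.C_mul_X_pow_eq_monomial, Polynomial.coeff_monomial]
      simp only [eq_comm]
    have e1 := hcoeff m₁
    have e2 := hcoeff m₂
    by_cases hm1 : m₁ = k
    · by_cases hm2 : m₂ = k
      · exact hne (hm1.trans hm2.symm)
      · rw [e2, if_neg hm2] at h2; exact h2 rfl
    · rw [e1, if_neg hm1] at h1; exact h1 rfl
  obtain ⟨z, hz, hzr⟩ := exists_nonzero_root hQ0 hQd
  refine ⟨z, hz, ?_⟩
  rw [hQ]
  simp [hzr]

open Polynomial in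
/-- Univariate Kapranov at `r = 0`: if the minimum of coefficient orders over the
support is attained at two indices, there is a root of order `0`. -/
theorem univariate_root (h : Polynomial K) {m₁ m₂ : ℕ}
    (hm₁ : m₁ ∈ h.support) (hm₂ : m₂ ∈ h.support) (hne : m₁ ≠ m₂)
    (hmin : ∀ k ∈ h.support, (h.coeff m₁).order ≤ (h.coeff k).order)
    (heq : (h.coeff m₂).order = (h.coeff m₁).order) :
    ∃ u : K, u ≠ 0 ∧ u.order = 0 ∧ h.eval u = 0 := by
  classical
  set L := (h.coeff m₁).order with hLdef
  set s : K := HahnSeries.single (-L) 1 with hsdef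
  have hs0 : s ≠ 0 := HahnSeries.single_ne_zero one_ne_zero
  have hso : s.order = -L := HahnSeries.order_single one_ne_zero
  set H : Polynomial K := Polynomial.C s * h with hHdef
  have hHcoeff : ∀ k, H.coeff k = s * h.coeff k := fun k => Polynomial.coeff_C_mul h
  have hcm₁ : h.coeff m₁ ≠ 0 := Polynomial.mem_support_iff.mp hm₁
  have hcm₂ : h.coeff m₂ ≠ 0 := Polynomial.mem_support_iff.mp hm₂
  -- coefficients of H lie in the valuation ring
  have hcoef : ∀ k, vge 0 (H.coeff k) := by
    intro k
    rw [hHcoeff]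
    rcases eq_or_ne (h.coeff k) 0 with hk | hk
    · rw [hk, mul_zero]; exact vge_zero _
    · apply vge_of_order_le
      rw [HahnSeries.order_mul hs0 hk, hso]
      have := hmin k (Polynomial.mem_support_iff.mpr hk)
      linarith
  -- residues of H
  have hres : ∀ k, (H.coeff k).coeff 0 =
      if h.coeff k ≠ 0 ∧ (h.coeff k).order = L then pc (h.coeff k) else 0 := by
    intro k
    rw [hHcoeff]
    rcases eq_or_ne (h.coeff k) 0 with hk | hk
    · rw [hk, mul_zero, if_neg (by tauto)]; rfl
    · have hmul_ne : s * h.coeff k ≠ 0 := mul_ne_zero hs0 hk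
      have hmo : (s * h.coeff k).order = -L + (h.coeff k).order := by
        rw [HahnSeries.order_mul hs0 hk, hso]
      by_cases hkL : (h.coeff k).order = L
      · rw [if_pos ⟨hk, hkL⟩]
        have : (s * h.coeff k).order = 0 := by rw [hmo, hkL]; ring
        have hpc : (s * h.coeff k).coeff 0 = pc (s * h.coeff k) := by
          rw [← this]; rfl
        rw [hpc, pc_mul hs0 hk, hsdef, pc_single one_ne_zero, one_mul]
      · rw [if_neg (by tauto)]
        apply HahnSeries.coeff_eq_zero_of_lt_order
        rw [hmo]
        have h1 := hmin k (Polynomial.mem_support_iff.mpr hk)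
        rcases lt_or_eq_of_le h1 with h2 | h2
        · linarith
        · exact absurd h2.symm hkL
  have hresm₁ : (resPoly H).coeff m₁ = pc (h.coeff m₁) := by
    rw [resPoly_coeff, hres, if_pos ⟨hcm₁, rfl⟩]
  have hresm₂ : (resPoly H).coeff m₂ = pc (h.coeff m₂) := by
    rw [resPoly_coeff, hres, if_pos ⟨hcm₂, heq⟩]
  have hr1 : (resPoly H).coeff m₁ ≠ 0 := by rw [hresm₁]; exact pc_ne_zero hcm₁
  have hr2 : (resPoly H).coeff m₂ ≠ 0 := by rw [hresm₂]; exact pc_ne_zero hcm₂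
  have hbar : resPoly H ≠ 0 := fun hc => hr1 (by rw [hc]; simp)
  obtain ⟨z₀, hz₀, hz₀root⟩ := exists_nonzero_root₂ hr1 hr2 hne
  -- H itself is nonzero of positive degree
  have hHm₁ : H.coeff m₁ ≠ 0 := by rw [hHcoeff]; exact mul_ne_zero hs0 hcm₁
  have hHm₂ : H.coeff m₂ ≠ 0 := by rw [hHcoeff]; exact mul_ne_zero hs0 hcm₂
  have hH0 : H ≠ 0 := fun hc => hHm₁ (by rw [hc]; simp)
  have hd : 1 ≤ H.natDegree := by
    rcases Nat.lt_or_ge 0 m₁ with hp | hp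
    · have := Polynomial.le_natDegree_of_ne_zero hHm₁; omega
    · have hm2pos : 0 < m₂ := by omega
      have := Polynomial.le_natDegree_of_ne_zero hHm₂; omega
  obtain ⟨u, huroot, hucar⟩ := engine_main H z₀ hH0 hd hcoef hz₀ hz₀root hbar
  obtain ⟨huc, huvge, hune⟩ := carrier_basic hz₀ hucar
  refine ⟨u, hune, order_eq_of_vge huvge (by rw [huc]; exact hz₀), ?_⟩
  have : Polynomial.eval u H = s * Polynomial.eval u h := by
    rw [hHdef]; simp
  rw [this] at huroot
  exact (mul_eq_zero.mp huroot).resolve_left hs0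


section Multivariate

lemma single_pow (a : ℚ) (m : ℕ) :
    (HahnSeries.single a 1 : K) ^ m = HahnSeries.single (m * a) 1 := by
  induction m with
  | zero => simp only [pow_zero, Nat.cast_zero, zero_mul]; rfl
  | succ m ih =>
      rw [pow_succ, ih, HahnSeries.single_mul_single, one_mul]
      congr 1
      push_cast
      ring

lemma prod_single {n : ℕ} (a : Fin n → ℚ) :
    (∏ j, (HahnSeries.single (a j) 1 : K)) = HahnSeries.single (∑ j, a j) 1 := by
  induction n with
  | zero =>
      simp only [Finset.univ_eq_empty, Finset.prod_empty, Finset.sum_empty]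
      rfl
  | succ n ih =>
      rw [Fin.prod_univ_castSucc, Fin.sum_univ_castSucc, ih, HahnSeries.single_mul_single,
        one_mul]

lemma order_prod {n : ℕ} (g : Fin n → K) (hg : ∀ j, g j ≠ 0) :
    (∏ j, g j) ≠ 0 ∧ (∏ j, g j).order = ∑ j, (g j).order := by
  induction n with
  | zero => refine ⟨by simp, by simp [HahnSeries.order_one]⟩
  | succ n ih =>
      obtain ⟨h1, h2⟩ := ih (fun j => g j.castSucc) (fun j => hg _)
      rw [Fin.prod_univ_castSucc, Fin.sum_univ_castSucc]
      refine ⟨mul_ne_zero h1 (hg _), ?_⟩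
      rw [HahnSeries.order_mul h1 (hg _), h2]

/-- Base-`(D+1)` digit sums are bounded. -/
lemma base_sum_lt (D : ℕ) : ∀ (n : ℕ) (f : Fin n → ℕ), (∀ j, f j ≤ D) →
    ∑ j, f j * (D+1)^(j : ℕ) < (D+1)^n := by
  intro n
  induction n with
  | zero => intro f _; simp
  | succ n ih =>
      intro f hf
      rw [Fin.sum_univ_castSucc]
      have h1 := ih (fun j => f j.castSucc) (fun j => hf _)
      have h2 : f (Fin.last n) ≤ D := hf _
      have h3 : (0:ℕ) < (D+1)^n := Nat.pow_pos (by omega)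
      have hle : f (Fin.last n) * (D+1)^n ≤ D * (D+1)^n :=
        Nat.mul_le_mul_right _ h2
      have : (D+1)^(n+1) = (D+1)^n + D * (D+1)^n := by ring
      simp only [Fin.coe_castSucc, Fin.val_last] at *
      omega

/-- Base-`(D+1)` representations are unique. -/
lemma base_inj (D : ℕ) : ∀ (n : ℕ) (f g : Fin n → ℕ), (∀ j, f j ≤ D) → (∀ j, g j ≤ D) →
    (∑ j, f j * (D+1)^(j : ℕ)) = (∑ j, g j * (D+1)^(j : ℕ)) → ∀ j, f j = g j := by
  intro n
  induction n with
  | zero => intro f g _ _ _ j; exact absurd j.2 (by omega)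
  | succ n ih =>
      intro f g hf hg heq j
      rw [Fin.sum_univ_castSucc, Fin.sum_univ_castSucc] at heq
      have h1 := base_sum_lt D n (fun j => f j.castSucc) (fun j => hf _)
      have h2 := base_sum_lt D n (fun j => g j.castSucc) (fun j => hg _)
      simp only [Fin.coe_castSucc, Fin.val_last] at *
      have hlast : f (Fin.last n) = g (Fin.last n) := by
        rcases Nat.lt_trichotomy (f (Fin.last n)) (g (Fin.last n)) with h | h | h
        · exfalso
          have : f (Fin.last n) * (D+1)^n + (D+1)^n ≤ g (Fin.last n) * (D+1)^n := by
            have := Nat.succ_le_of_lt h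
            calc f (Fin.last n) * (D+1)^n + (D+1)^n = (f (Fin.last n) + 1) * (D+1)^n := by ring
            _ ≤ g (Fin.last n) * (D+1)^n := Nat.mul_le_mul_right _ this
          omega
        · exact h
        · exfalso
          have : g (Fin.last n) * (D+1)^n + (D+1)^n ≤ f (Fin.last n) * (D+1)^n := by
            have := Nat.succ_le_of_lt h
            calc g (Fin.last n) * (D+1)^n + (D+1)^n = (g (Fin.last n) + 1) * (D+1)^n := by ring
            _ ≤ f (Fin.last n) * (D+1)^n := Nat.mul_le_mul_right _ this
          omega
      have hsum : (∑ j : Fin n, f j.castSucc * (D+1)^(j:ℕ)) =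
          ∑ j : Fin n, g j.castSucc * (D+1)^(j:ℕ) := by
        rw [hlast] at heq
        omega
      refine Fin.lastCases hlast (fun i => ?_) j
      exact ih (fun j => f j.castSucc) (fun j => g j.castSucc) (fun j => hf _) (fun j => hg _)
        hsum i

end Multivariate


section Directions

open MvPolynomial

variable {n : ℕ}

lemma coords_le_totalDegree {f : MvPolynomial (Fin n) K} {i : Fin n →₀ ℕ}
    (hi : i ∈ f.support) (j : Fin n) : i j ≤ f.totalDegree := by
  have h1 : (i.sum fun _ e => e) ≤ f.totalDegree := MvPolynomial.le_totalDegree hi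
  rcases eq_or_ne (i j) 0 with h | h
  · omega
  · have hj : j ∈ i.support := Finsupp.mem_support_iff.mpr h
    have := Finset.single_le_sum (f := fun j => i j) (fun _ _ => Nat.zero_le _) hj
    calc i j ≤ i.support.sum i := this
    _ ≤ f.totalDegree := h1

lemma term_order {f : MvPolynomial (Fin n) K} {r : Fin n → ℚ} {x : Fin n → K}
    (hx : ∀ j, x j ≠ 0) (hord : ∀ j, (x j).order = r j) {i : Fin n →₀ ℕ}
    (hi : i ∈ f.support) :
    f.coeff i * ∏ j, x j ^ i j ≠ 0 ∧
      (f.coeff i * ∏ j, x j ^ i j).order = wt f r i := by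
  have hci : f.coeff i ≠ 0 := MvPolynomial.mem_support_iff.mp hi
  have hppow : ∀ j, x j ^ i j ≠ 0 := fun j => pow_ne_zero _ (hx j)
  obtain ⟨hp1, hp2⟩ := order_prod (fun j => x j ^ i j) hppow
  refine ⟨mul_ne_zero hci hp1, ?_⟩
  rw [HahnSeries.order_mul hci hp1, hp2, wt]
  congr 1
  refine Finset.sum_congr rfl fun j _ => ?_
  rw [HahnSeries.order_pow, hord j, nsmul_eq_mul]

/-- The easy direction: orders of roots lie in the tropical hypersurface. -/
lemma easy_dir {f : MvPolynomial (Fin n) K} (hf : f ≠ 0) {r : Fin n → ℚ} {x : Fin n → K}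
    (hx : ∀ j, x j ≠ 0) (hroot : MvPolynomial.eval x f = 0)
    (hord : ∀ j, (x j).order = r j) : r ∈ tropSet f := by
  classical
  have hsupp : f.support.Nonempty := by
    rw [Finset.nonempty_iff_ne_empty, Ne, MvPolynomial.support_eq_empty]
    exact hf
  obtain ⟨i₀, hi₀, hmin⟩ := f.support.exists_min_image (wt f r) hsupp
  have heval : ∑ i ∈ f.support, f.coeff i * ∏ j, x j ^ i j = 0 := by
    rw [← MvPolynomial.eval_eq']
    exact hroot
  -- there must be a second index attaining the minimum
  have hsecond : ∃ i₁ ∈ f.support, i₁ ≠ i₀ ∧ wt f r i₁ = wt f r i₀ := by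
    by_contra hcon
    push_neg at hcon
    have hstrict : ∀ i ∈ f.support, i ≠ i₀ → wt f r i₀ < wt f r i := by
      intro i hi hne
      exact lt_of_le_of_ne (hmin i hi) (fun hc => hcon i hi hne (hc.symm))
    have hzero : (0 : K).coeff (wt f r i₀) = 0 := rfl
    rw [← heval, coeff_sum, Finset.sum_eq_single i₀] at hzero
    · obtain ⟨ht1, ht2⟩ := term_order hx hord hi₀
      rw [← ht2] at hzero
      exact (mt HahnSeries.coeff_order_eq_zero.mp ht1) hzero
    · intro i hi hne
      obtain ⟨ht1, ht2⟩ := term_order hx hord hi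
      exact HahnSeries.coeff_eq_zero_of_lt_order (by rw [ht2]; exact hstrict i hi hne)
    · intro hcon2
      exact absurd hi₀ hcon2
  obtain ⟨i₁, hi₁, hne₁, heq₁⟩ := hsecond
  have htrop : trop f r = (wt f r i₀ : WithTop ℚ) := by
    apply le_antisymm
    · exact Finset.inf_le hi₀
    · apply Finset.le_inf
      intro i hi
      exact_mod_cast hmin i hi
  exact ⟨i₀, hi₀, i₁, hi₁, (Ne.symm hne₁), htrop.symm, by rw [htrop]; exact_mod_cast heq₁⟩

/-- The hard direction: every point of the tropical hypersurface lifts to a root. -/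
lemma hard_dir {f : MvPolynomial (Fin n) K} (hf : f ≠ 0) {b : Fin n → ℚ}
    (hb : b ∈ tropSet f) :
    ∃ x : Fin n → K, (∀ j, x j ≠ 0) ∧ MvPolynomial.eval x f = 0 ∧
      ∀ j, (x j).order = b j := by
  classical
  obtain ⟨i₀, hi₀, j₀, hj₀, hne₀, htrop₀, htropj⟩ := hb
  have hminw : ∀ i ∈ f.support, wt f b i₀ ≤ wt f b i := by
    intro i hi
    have h1 : trop f b ≤ (wt f b i : WithTop ℚ) := Finset.inf_le hi
    rw [← htrop₀] at h1
    exact_mod_cast h1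
  have heqw : wt f b j₀ = wt f b i₀ := by
    have := htropj.trans htrop₀.symm
    exact_mod_cast this
  set D := f.totalDegree with hD
  set E : (Fin n →₀ ℕ) → ℕ := fun i => ∑ j, i j * (D+1)^(j : ℕ) with hE
  have hEinj : ∀ i ∈ f.support, ∀ i' ∈ f.support, E i = E i' → i = i' := by
    intro i hi i' hi' hEe
    have := base_inj D n (fun j => i j) (fun j => i' j)
      (fun j => coords_le_totalDegree hi j) (fun j => coords_le_totalDegree hi' j) hEe
    ext j
    exact this j
  set Si : (Fin n →₀ ℕ) → ℚ := fun i => ∑ j, (i j : ℚ) * b j with hSi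
  set ci : (Fin n →₀ ℕ) → K := fun i => f.coeff i * HahnSeries.single (Si i) 1 with hci
  have hci_ne : ∀ i ∈ f.support, ci i ≠ 0 := fun i hi =>
    mul_ne_zero (MvPolynomial.mem_support_iff.mp hi) (HahnSeries.single_ne_zero one_ne_zero)
  have hci_ord : ∀ i ∈ f.support, (ci i).order = wt f b i := by
    intro i hi
    rw [hci]
    simp only
    rw [HahnSeries.order_mul (MvPolynomial.mem_support_iff.mp hi)
      (HahnSeries.single_ne_zero one_ne_zero), HahnSeries.order_single one_ne_zero]
    rfl
  set hp : Polynomial K := ∑ i ∈ f.support, Polynomial.C (ci i) * Polynomial.X ^ (E i)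
    with hhp
  have hp_coeff : ∀ i ∈ f.support, hp.coeff (E i) = ci i := by
    intro i hi
    rw [hhp, Polynomial.finset_sum_coeff, Finset.sum_eq_single i]
    · rw [Polynomial.coeff_C_mul, Polynomial.coeff_X_pow, if_pos rfl, mul_one]
    · intro i' hi' hne
      rw [Polynomial.coeff_C_mul, Polynomial.coeff_X_pow,
        if_neg (fun hc => hne (hEinj i' hi' i hi hc.symm)), mul_zero]
    · intro hcon; exact absurd hi hcon
  have hp_supp : ∀ m ∈ hp.support, ∃ i ∈ f.support, E i = m := by
    intro m hm
    have hne0 : hp.coeff m ≠ 0 := Polynomial.mem_support_iff.mp hm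
    rw [hhp, Polynomial.finset_sum_coeff] at hne0
    obtain ⟨i, hi, hine⟩ := Finset.exists_ne_zero_of_sum_ne_zero hne0
    rw [Polynomial.coeff_C_mul, Polynomial.coeff_X_pow] at hine
    refine ⟨i, hi, ?_⟩
    by_contra hc
    rw [if_neg (fun h => hc h.symm), mul_zero] at hine
    exact hine rfl
  have hm₁ : E i₀ ∈ hp.support :=
    Polynomial.mem_support_iff.mpr (by rw [hp_coeff i₀ hi₀]; exact hci_ne i₀ hi₀)
  have hm₂ : E j₀ ∈ hp.support :=
    Polynomial.mem_support_iff.mpr (by rw [hp_coeff j₀ hj₀]; exact hci_ne j₀ hj₀)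
  have hmne : E i₀ ≠ E j₀ := fun hc => hne₀ (hEinj i₀ hi₀ j₀ hj₀ hc)
  have hmin' : ∀ k ∈ hp.support, (hp.coeff (E i₀)).order ≤ (hp.coeff k).order := by
    intro k hk
    obtain ⟨i, hi, hEi⟩ := hp_supp k hk
    rw [← hEi, hp_coeff i hi, hp_coeff i₀ hi₀, hci_ord i hi, hci_ord i₀ hi₀]
    exact hminw i hi
  have heq' : (hp.coeff (E j₀)).order = (hp.coeff (E i₀)).order := by
    rw [hp_coeff j₀ hj₀, hp_coeff i₀ hi₀, hci_ord j₀ hj₀, hci_ord i₀ hi₀]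
    exact heqw
  obtain ⟨u, hu0, huord, hueval⟩ := univariate_root hp hm₁ hm₂ hmne hmin' heq'
  -- the lifted point
  set x : Fin n → K := fun j => HahnSeries.single (b j) 1 * u ^ ((D+1)^(j : ℕ)) with hx
  have hx0 : ∀ j, x j ≠ 0 := fun j =>
    mul_ne_zero (HahnSeries.single_ne_zero one_ne_zero) (pow_ne_zero _ hu0)
  have hxord : ∀ j, (x j).order = b j := by
    intro j
    rw [hx]
    simp only
    rw [HahnSeries.order_mul (HahnSeries.single_ne_zero one_ne_zero) (pow_ne_zero _ hu0),
      HahnSeries.order_single one_ne_zero, HahnSeries.order_pow, huord, smul_zero, add_zero]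
  refine ⟨x, hx0, ?_, hxord⟩
  -- evaluation identity
  have hterm : ∀ i ∈ f.support,
      f.coeff i * ∏ j, x j ^ i j = ci i * u ^ (E i) := by
    intro i hi
    have hprod : ∏ j, x j ^ i j =
        HahnSeries.single (Si i) 1 * u ^ (E i) := by
      have h1 : ∀ j, x j ^ i j =
          HahnSeries.single ((i j : ℚ) * b j) 1 * u ^ (i j * (D+1)^(j : ℕ)) := by
        intro j
        rw [hx]
        simp only
        rw [mul_pow, ← pow_mul, single_pow]
        ring_nf
      rw [Finset.prod_congr rfl (fun j _ => h1 j), Finset.prod_mul_distrib,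
        prod_single, Finset.prod_pow_eq_pow_sum]
    rw [hprod, hci]
    ring
  rw [MvPolynomial.eval_eq', Finset.sum_congr rfl hterm]
  rw [hhp] at hueval
  rw [Polynomial.eval_finset_sum] at hueval
  rw [← hueval]
  refine Finset.sum_congr rfl fun i hi => ?_
  rw [Polynomial.eval_mul, Polynomial.eval_C, Polynomial.eval_pow, Polynomial.eval_X]

end Directions

end Kap

/-- Kapranov theorem (orders only): the image of the set of roots of `f` in
`(K*)ⁿ` under the componentwise order map equals the tropical hypersurface
`𝒯(f)`. -/
theorem kapranov_orders (n : ℕ) (f : MvPolynomial (Fin n) K) (hf : f ≠ 0) :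
    {r : Fin n → ℚ | ∃ x : Fin n → K, (∀ j, x j ≠ 0) ∧
        MvPolynomial.eval x f = 0 ∧ ∀ j, (x j).order = r j} = tropSet f := by
  ext r
  constructor
  · rintro ⟨x, hx, hroot, hord⟩
    exact Kap.easy_dir hf hx hroot hord
  · intro hb
    exact Kap.hard_dir hf hb
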